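/- The quandle F = M × X with (a,i)*(b,j) = ((1−t)·a + t·b + e_i − e_j, j) is the free medial quandle on the generating set {(0,i) : i ∈ X}: every map from {(0,i) : i ∈ X} to a medial quandle Q extends uniquely to a quandle homomorphism F → Q. -/

import Mathlib

open LaurentPolynomial

/-- The standard basis vectors `e_i` of `⊕_{x ∈ X∖{z}} ℤ[t,t⁻¹]`, with `e_z = 0`. -/
noncomputable def freeMQ.e {X : Type*} [DecidableEq X] (z : X) (i : X) :
    {x : X // x ≠ z} →₀ LaurentPolynomial ℤ :=
  if h : i = z then 0 else Finsupp.single ⟨i, h⟩ 1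

/-- The operation `(a,i) * (b,j) = ((1-t)·a + t·b + e_i - e_j, j)` on `M × X`. -/
noncomputable def freeMQ.op {X : Type*} [DecidableEq X] (z : X)
    (p q : ({x : X // x ≠ z} →₀ LaurentPolynomial ℤ) × X) :
    ({x : X // x ≠ z} →₀ LaurentPolynomial ℤ) × X :=
  (((1 - T 1 : LaurentPolynomial ℤ)) • p.1 + (T 1 : LaurentPolynomial ℤ) • q.1 + freeMQ.e z p.2 - freeMQ.e z q.2, q.2)

/-- The left division `(a,i) \ (b,j) = ((1-t⁻¹)·a + t⁻¹·(b + e_j - e_i), j)` on `M × X`. -/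
noncomputable def freeMQ.ld {X : Type*} [DecidableEq X] (z : X)
    (p q : ({x : X // x ≠ z} →₀ LaurentPolynomial ℤ) × X) :
    ({x : X // x ≠ z} →₀ LaurentPolynomial ℤ) × X :=
  (((1 - T (-1) : LaurentPolynomial ℤ)) • p.1 + (T (-1) : LaurentPolynomial ℤ) • (q.1 + freeMQ.e z q.2 - freeMQ.e z p.2), q.2)


namespace FMQ
variable {Q : Type*} (opQ : Q → Q → Q)

noncomputable def lam (hlq : ∀ x y, ∃! u, opQ x u = y) (x : Q) : Equiv.Perm Q where
  toFun := opQ x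
  invFun y := (hlq x y).exists.choose
  left_inv y := (hlq x (opQ x y)).unique (hlq x (opQ x y)).exists.choose_spec rfl
  right_inv y := (hlq x y).exists.choose_spec

variable (hlq : ∀ x y, ∃! u, opQ x u = y)

@[simp] lemma lam_apply (x y : Q) : lam opQ hlq x y = opQ x y := rfl

lemma ld_perm (hldist : ∀ x y w, opQ x (opQ y w) = opQ (opQ x y) (opQ x w)) (x y : Q) :
    lam opQ hlq (opQ x y) = lam opQ hlq x * lam opQ hlq y * (lam opQ hlq x)⁻¹ := by
  ext w
  have h : opQ x (((lam opQ hlq x)⁻¹ : Equiv.Perm Q) w) = w := (lam opQ hlq x).apply_symm_apply w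
  simp only [Equiv.Perm.mul_apply, lam_apply]
  conv_lhs => rw [← h]
  exact (hldist x y _).symm

lemma med_perm (hmed : ∀ x y u v, opQ (opQ x y) (opQ u v) = opQ (opQ x u) (opQ y v))
    (x y u : Q) :
    lam opQ hlq (opQ x y) * lam opQ hlq u = lam opQ hlq (opQ x u) * lam opQ hlq y := by
  ext v; simpa using hmed x y u v

lemma star_comm (hldist : ∀ x y w, opQ x (opQ y w) = opQ (opQ x y) (opQ x w))
    (hmed : ∀ x y u v, opQ (opQ x y) (opQ u v) = opQ (opQ x u) (opQ y v))
    (x y u : Q) :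
    lam opQ hlq y * (lam opQ hlq x)⁻¹ * lam opQ hlq u
      = lam opQ hlq u * (lam opQ hlq x)⁻¹ * lam opQ hlq y := by
  have h := med_perm opQ hlq hmed x y u
  rw [ld_perm opQ hlq hldist x y, ld_perm opQ hlq hldist x u] at h
  have := mul_left_cancel (a := lam opQ hlq x)
    (by simpa [mul_assoc] using h)
  simpa [mul_assoc] using this

end FMQ

namespace FMQ
variable {Q : Type*} (opQ : Q → Q → Q)
variable (hlq : ∀ x y, ∃! u, opQ x u = y)

def Lam : Subgroup (Equiv.Perm Q) := Subgroup.closure (Set.range (lam opQ hlq))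

lemma L1 (hldist : ∀ x y w, opQ x (opQ y w) = opQ (opQ x y) (opQ x w))
    {g : Equiv.Perm Q} (hg : g ∈ Lam opQ hlq) (x : Q) :
    lam opQ hlq (g x) = g * lam opQ hlq x * g⁻¹ := by
  induction hg using Subgroup.closure_induction generalizing x with
  | mem g hg =>
      obtain ⟨y, rfl⟩ := hg
      simpa using ld_perm opQ hlq hldist y x
  | one => simp
  | mul g h _ _ ihg ihh =>
      have : lam opQ hlq ((g * h) x) = lam opQ hlq (g (h x)) := by
        simp [Equiv.Perm.mul_apply]
      rw [this, ihg, ihh]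
      group
  | inv g _ ihg =>
      have h2 := ihg (g⁻¹ x)
      have h3 : g (g⁻¹ x) = x := by simp
      rw [h3] at h2
      rw [h2]; group

def Sgen : Set (Equiv.Perm Q) := {g | ∃ a b, g = lam opQ hlq a * (lam opQ hlq b)⁻¹}

def D : Subgroup (Equiv.Perm Q) := Subgroup.closure (Sgen opQ hlq)

lemma Sgen_comm (hldist : ∀ x y w, opQ x (opQ y w) = opQ (opQ x y) (opQ x w))
    (hmed : ∀ x y u v, opQ (opQ x y) (opQ u v) = opQ (opQ x u) (opQ y v)) :
    ∀ g ∈ Sgen opQ hlq, ∀ h ∈ Sgen opQ hlq, g * h = h * g := by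
  rintro _ ⟨a, b, rfl⟩ _ ⟨c, d, rfl⟩
  set l := lam opQ hlq
  have key : ∀ u : Q, l c * (l d)⁻¹ * l u = l u * (l d)⁻¹ * l c :=
    fun u => star_comm opQ hlq hldist hmed d c u
  -- (l b)⁻¹ * (l c * (l d)⁻¹) * l b = (l d)⁻¹ * l c
  have h1 : (l b)⁻¹ * (l c * (l d)⁻¹ * l b) = (l d)⁻¹ * l c := by
    rw [key b]; group
  -- l a * ((l d)⁻¹ * l c) * (l a)⁻¹ = l c * (l d)⁻¹
  have h2 : l a * ((l d)⁻¹ * l c) * (l a)⁻¹ = l c * (l d)⁻¹ := by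
    rw [← mul_assoc, ← key a]; group
  calc l a * (l b)⁻¹ * (l c * (l d)⁻¹)
      = l a * ((l b)⁻¹ * (l c * (l d)⁻¹ * l b)) * (l a)⁻¹ * (l a * (l b)⁻¹) := by group
    _ = l a * ((l d)⁻¹ * l c) * (l a)⁻¹ * (l a * (l b)⁻¹) := by rw [h1]
    _ = l c * (l d)⁻¹ * (l a * (l b)⁻¹) := by rw [h2]

lemma D_le_Lam : D opQ hlq ≤ Lam opQ hlq := by
  rw [D, Subgroup.closure_le]
  rintro _ ⟨a, b, rfl⟩
  exact mul_mem (Subgroup.subset_closure ⟨a, rfl⟩)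
    (inv_mem (Subgroup.subset_closure ⟨b, rfl⟩))

lemma conj_mem (hldist : ∀ x y w, opQ x (opQ y w) = opQ (opQ x y) (opQ x w))
    {g : Equiv.Perm Q} (hg : g ∈ Lam opQ hlq)
    {d : Equiv.Perm Q} (hd : d ∈ D opQ hlq) : g * d * g⁻¹ ∈ D opQ hlq := by
  induction hd using Subgroup.closure_induction with
  | mem d hdm =>
      obtain ⟨a, b, rfl⟩ := hdm
      refine Subgroup.subset_closure ⟨g a, g b, ?_⟩
      rw [L1 opQ hlq hldist hg a, L1 opQ hlq hldist hg b]
      group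
  | one => simpa using one_mem _
  | mul x y _ _ ihx ihy =>
      have : g * (x * y) * g⁻¹ = (g * x * g⁻¹) * (g * y * g⁻¹) := by group
      rw [this]; exact mul_mem ihx ihy
  | inv x _ ihx =>
      have : g * x⁻¹ * g⁻¹ = (g * x * g⁻¹)⁻¹ := by group
      rw [this]; exact inv_mem ihx

end FMQ

namespace FMQ
variable {Q : Type*} (opQ : Q → Q → Q)
variable (hlq : ∀ x y, ∃! u, opQ x u = y)
variable {X : Type*} [DecidableEq X] (z : X) (ψ : X → Q)
variable (hldist : ∀ x y w, opQ x (opQ y w) = opQ (opQ x y) (opQ x w))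
variable (hmed : ∀ x y u v, opQ (opQ x y) (opQ u v) = opQ (opQ x u) (opQ y v))

noncomputable def sig : Equiv.Perm Q := lam opQ hlq (ψ z)

lemma sig_mem : sig opQ hlq z ψ ∈ Lam opQ hlq := Subgroup.subset_closure ⟨ψ z, rfl⟩

noncomputable def elt (i : {x : X // x ≠ z}) (n : ℤ) : ↥(D opQ hlq) :=
  ⟨(sig opQ hlq z ψ) ^ n * (lam opQ hlq (ψ i.1) * (sig opQ hlq z ψ)⁻¹) * ((sig opQ hlq z ψ) ^ n)⁻¹,
    conj_mem opQ hlq hldist (zpow_mem (sig_mem opQ hlq z ψ) n)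
      (Subgroup.subset_closure ⟨ψ i.1, ψ z, rfl⟩)⟩

noncomputable def Phi0 : ({x : X // x ≠ z} →₀ LaurentPolynomial ℤ) →+ Additive ↥(D opQ hlq) :=
  letI : CommGroup ↥(D opQ hlq) :=
    Subgroup.closureCommGroupOfComm (Sgen_comm opQ hlq hldist hmed)
  Finsupp.liftAddHom fun i =>
    (Finsupp.liftAddHom fun n =>
      zmultiplesHom (Additive ↥(D opQ hlq)) (Additive.ofMul (elt opQ hlq z ψ hldist i n))).comp
      AddMonoidAlgebra.coeffAddEquiv.toAddMonoidHom

lemma Phi0_single (i : {x : X // x ≠ z}) (n : ℤ) (c : ℤ) :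
    Phi0 opQ hlq z ψ hldist hmed (Finsupp.single i (AddMonoidAlgebra.single n c))
      = c • Additive.ofMul (elt opQ hlq z ψ hldist i n) := by
  letI : CommGroup ↥(D opQ hlq) :=
    Subgroup.closureCommGroupOfComm (Sgen_comm opQ hlq hldist hmed)
  rw [Phi0]
  erw [Finsupp.liftAddHom_apply_single, AddMonoidHom.comp_apply]
  erw [Finsupp.liftAddHom_apply_single]
  erw [zmultiplesHom_apply]

end FMQ

set_option linter.unusedSectionVars false

namespace FMQ
variable {Q : Type*} (opQ : Q → Q → Q)
variable (hlq : ∀ x y, ∃! u, opQ x u = y)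
variable {X : Type*} [DecidableEq X] (z : X) (ψ : X → Q)
variable (hldist : ∀ x y w, opQ x (opQ y w) = opQ (opQ x y) (opQ x w))
variable (hmed : ∀ x y u v, opQ (opQ x y) (opQ u v) = opQ (opQ x u) (opQ y v))

noncomputable def P (m : {x : X // x ≠ z} →₀ LaurentPolynomial ℤ) : Equiv.Perm Q :=
  (Additive.toMul (Phi0 opQ hlq z ψ hldist hmed m) : ↥(D opQ hlq)).1

lemma P_mem (m) : P opQ hlq z ψ hldist hmed m ∈ D opQ hlq :=
  (Additive.toMul (Phi0 opQ hlq z ψ hldist hmed m)).2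

lemma P_add (m m') : P opQ hlq z ψ hldist hmed (m + m')
    = P opQ hlq z ψ hldist hmed m * P opQ hlq z ψ hldist hmed m' := by
  unfold P; rw [map_add]; rfl

lemma P_zero : P opQ hlq z ψ hldist hmed 0 = 1 := by
  unfold P; rw [map_zero]; rfl

lemma P_neg (m) : P opQ hlq z ψ hldist hmed (-m) = (P opQ hlq z ψ hldist hmed m)⁻¹ := by
  unfold P; rw [map_neg]; rfl

lemma P_comm (m m') : P opQ hlq z ψ hldist hmed m * P opQ hlq z ψ hldist hmed m'
    = P opQ hlq z ψ hldist hmed m' * P opQ hlq z ψ hldist hmed m := by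
  rw [← P_add, ← P_add, add_comm]

lemma P_single (i : {x : X // x ≠ z}) (n c : ℤ) :
    P opQ hlq z ψ hldist hmed (Finsupp.single i (AddMonoidAlgebra.single n c))
      = ((elt opQ hlq z ψ hldist i n : ↥(D opQ hlq)) : Equiv.Perm Q) ^ c := by
  unfold P
  rw [Phi0_single]
  rw [toMul_zsmul, toMul_ofMul]
  simp

lemma P_e (i : X) : P opQ hlq z ψ hldist hmed (freeMQ.e z i)
    = lam opQ hlq (ψ i) * (sig opQ hlq z ψ)⁻¹ := by
  by_cases h : i = z
  · subst h
    rw [freeMQ.e, dif_pos rfl, P_zero, sig, mul_inv_cancel]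
  · rw [freeMQ.e, dif_neg h]
    have h1 : (1 : LaurentPolynomial ℤ) = AddMonoidAlgebra.single (0:ℤ) (1:ℤ) := rfl
    rw [h1, P_single, zpow_one, elt]
    simp

end FMQ

namespace FMQ
variable {Q : Type*} (opQ : Q → Q → Q)
variable (hlq : ∀ x y, ∃! u, opQ x u = y)
variable {X : Type*} [DecidableEq X] (z : X) (ψ : X → Q)
variable (hldist : ∀ x y w, opQ x (opQ y w) = opQ (opQ x y) (opQ x w))
variable (hmed : ∀ x y u v, opQ (opQ x y) (opQ u v) = opQ (opQ x u) (opQ y v))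

lemma P_T (m : {x : X // x ≠ z} →₀ LaurentPolynomial ℤ) :
    P opQ hlq z ψ hldist hmed ((T 1 : LaurentPolynomial ℤ) • m)
      = sig opQ hlq z ψ * P opQ hlq z ψ hldist hmed m * (sig opQ hlq z ψ)⁻¹ := by
  have key : (AddMonoidHom.mk' (fun m => Additive.ofMul
        (P opQ hlq z ψ hldist hmed ((T 1 : LaurentPolynomial ℤ) • m)))
        (fun m m' => by rw [smul_add, P_add]; rfl) :
        ({x : X // x ≠ z} →₀ LaurentPolynomial ℤ) →+ Additive (Equiv.Perm Q))
      = AddMonoidHom.mk' (fun m => Additive.ofMul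
          (sig opQ hlq z ψ * P opQ hlq z ψ hldist hmed m * (sig opQ hlq z ψ)⁻¹))
        (fun m m' => by
          rw [P_add, ← ofMul_mul]
          congr 1
          group) := by
    apply Finsupp.addHom_ext'
    intro i
    apply AddMonoidAlgebra.addHom_ext'
    intro n
    apply AddMonoidHom.ext_int
    simp only [AddMonoidHom.comp_apply, Function.comp_apply, Finsupp.singleAddHom_apply,
      AddMonoidAlgebra.singleAddHom_apply, AddMonoidHom.mk'_apply]
    congr 1
    have h1 : (T 1 : LaurentPolynomial ℤ) •
        (Finsupp.single i (AddMonoidAlgebra.single n (1:ℤ)) : {x : X // x ≠ z} →₀ LaurentPolynomial ℤ)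
        = Finsupp.single i (AddMonoidAlgebra.single (1 + n) (1:ℤ)) := by
      rw [Finsupp.smul_single, smul_eq_mul]
      congr 1
      show (T 1 : LaurentPolynomial ℤ) * T n = T (1 + n)
      rw [← T_add]
    rw [h1, P_single, P_single, zpow_one, zpow_one]
    show (sig opQ hlq z ψ) ^ (1+n) * _ * ((sig opQ hlq z ψ) ^ (1+n))⁻¹
      = sig opQ hlq z ψ * ((sig opQ hlq z ψ) ^ n * _ * ((sig opQ hlq z ψ) ^ n)⁻¹)
        * (sig opQ hlq z ψ)⁻¹
    rw [zpow_add, zpow_one]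
    group
  have := DFunLike.congr_fun key m
  simpa using congrArg Additive.toMul this

end FMQ

namespace FMQ
variable {X : Type*} [DecidableEq X] (z : X)

lemma e_z : freeMQ.e z z = 0 := dif_pos rfl

lemma T_cancel1 (v : {x : X // x ≠ z} →₀ LaurentPolynomial ℤ) :
    (T 1 : LaurentPolynomial ℤ) • (T (-1) : LaurentPolynomial ℤ) • v = v := by
  rw [smul_smul, ← T_add]; norm_num [T_zero]

lemma T_cancel2 (v : {x : X // x ≠ z} →₀ LaurentPolynomial ℤ) :
    (T (-1) : LaurentPolynomial ℤ) • (T 1 : LaurentPolynomial ℤ) • v = v := by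
  rw [smul_smul, ← T_add]; norm_num [T_zero]

lemma op_gen (i : X) (b : {x : X // x ≠ z} →₀ LaurentPolynomial ℤ) (j : X) :
    freeMQ.op z (0, i) (b, j)
      = ((T 1 : LaurentPolynomial ℤ) • b + freeMQ.e z i - freeMQ.e z j, j) := by
  rw [freeMQ.op]; simp

lemma ld_gen (i : X) (b : {x : X // x ≠ z} →₀ LaurentPolynomial ℤ) (j : X) :
    freeMQ.ld z (0, i) (b, j)
      = ((T (-1) : LaurentPolynomial ℤ) • (b + freeMQ.e z j - freeMQ.e z i), j) := by
  rw [freeMQ.ld]; simp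

lemma op_ld_cancel (p q : ({x : X // x ≠ z} →₀ LaurentPolynomial ℤ) × X) :
    freeMQ.op z p (freeMQ.ld z p q) = q := by
  obtain ⟨a, i⟩ := p; obtain ⟨b, j⟩ := q
  rw [freeMQ.ld, freeMQ.op]
  have hT : (T 1 : LaurentPolynomial ℤ) * T (-1) = 1 := by
    rw [← T_add]; norm_num [T_zero]
  refine Prod.ext ?_ rfl
  show (1 - T 1 : LaurentPolynomial ℤ) • a
      + (T 1 : LaurentPolynomial ℤ) • ((1 - T (-1) : LaurentPolynomial ℤ) • a
        + (T (-1) : LaurentPolynomial ℤ) • (b + freeMQ.e z j - freeMQ.e z i))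
      + freeMQ.e z i - freeMQ.e z j = b
  match_scalars <;> first | linear_combination hT | linear_combination -hT

end FMQ

namespace FMQ
section Reach
variable {X : Type*} [DecidableEq X] (z : X)
variable (S : Set (({x : X // x ≠ z} →₀ LaurentPolynomial ℤ) × X))
variable (hop : ∀ (i : X) q, q ∈ S → freeMQ.op z (0, i) q ∈ S)
variable (hld : ∀ (i : X) q, q ∈ S → freeMQ.ld z (0, i) q ∈ S)

include hop hld
set_option maxHeartbeats 1000000

lemma reach_ldz {a : {x : X // x ≠ z} →₀ LaurentPolynomial ℤ} {j : X} (h : (a, j) ∈ S) :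
    ((T (-1) : LaurentPolynomial ℤ) • (a + freeMQ.e z j), j) ∈ S := by
  have h1 := hld z (a, j) h
  rw [ld_gen, e_z, sub_zero] at h1
  exact h1

lemma reach_opz {a : {x : X // x ≠ z} →₀ LaurentPolynomial ℤ} {j : X} (h : (a, j) ∈ S) :
    ((T 1 : LaurentPolynomial ℤ) • a - freeMQ.e z j, j) ∈ S := by
  have h1 := hop z (a, j) h
  rw [op_gen, e_z, add_zero] at h1
  exact h1

lemma reach_add_e {a : {x : X // x ≠ z} →₀ LaurentPolynomial ℤ} (i : X) {j : X}
    (h : (a, j) ∈ S) : (a + freeMQ.e z i, j) ∈ S := by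
  have h1 := reach_ldz z S hop hld h
  have h2 := hop i ((T (-1) : LaurentPolynomial ℤ) • (a + freeMQ.e z j), j) h1
  rw [op_gen, T_cancel1] at h2
  have h3 : a + freeMQ.e z j + freeMQ.e z i - freeMQ.e z j = a + freeMQ.e z i := by abel
  rwa [h3] at h2

lemma reach_sub_e {a : {x : X // x ≠ z} →₀ LaurentPolynomial ℤ} (i : X) {j : X}
    (h : (a, j) ∈ S) : (a - freeMQ.e z i, j) ∈ S := by
  have h1 := hld i (a, j) h
  rw [ld_gen] at h1
  have h2 := reach_opz z S hop hld h1
  rw [T_cancel1] at h2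
  have h3 : a + freeMQ.e z j - freeMQ.e z i - freeMQ.e z j = a - freeMQ.e z i := by abel
  rwa [h3] at h2

lemma reach_add_nat (n : ℕ) {a : {x : X // x ≠ z} →₀ LaurentPolynomial ℤ} (i : X) {j : X}
    (h : (a, j) ∈ S) : (a + (T (n:ℤ) : LaurentPolynomial ℤ) • freeMQ.e z i, j) ∈ S := by
  induction n generalizing a with
  | zero => simpa [T_zero] using reach_add_e z S hop hld i h
  | succ n ih =>
      have h1 := reach_ldz z S hop hld h
      have h2 := h1
      have h3 := ih (a := (T (-1) : LaurentPolynomial ℤ) • (a + freeMQ.e z j)) h1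
      have h4 := reach_opz z S hop hld h3
      have h5 : (T 1 : LaurentPolynomial ℤ) • ((T (-1) : LaurentPolynomial ℤ) • (a + freeMQ.e z j)
            + (T (n:ℤ) : LaurentPolynomial ℤ) • freeMQ.e z i) - freeMQ.e z j
          = a + (T ((n:ℕ)+1:ℤ) : LaurentPolynomial ℤ) • freeMQ.e z i := by
        rw [smul_add, T_cancel1, smul_smul, ← T_add]
        push_cast
        rw [add_comm (1:ℤ) (n:ℤ)]
        abel
      rw [h5] at h4
      convert h4 using 3
      push_cast; rfl

lemma reach_add_negnat (n : ℕ) {a : {x : X // x ≠ z} →₀ LaurentPolynomial ℤ} (i : X) {j : X}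
    (h : (a, j) ∈ S) : (a + (T (-(n:ℤ)) : LaurentPolynomial ℤ) • freeMQ.e z i, j) ∈ S := by
  induction n generalizing a with
  | zero => simpa [T_zero] using reach_add_e z S hop hld i h
  | succ n ih =>
      have h1 := reach_opz z S hop hld h
      have h3 := ih (a := (T 1 : LaurentPolynomial ℤ) • a - freeMQ.e z j) h1
      have h4 := reach_ldz z S hop hld h3
      have h5 : (T (-1) : LaurentPolynomial ℤ) • ((T 1 : LaurentPolynomial ℤ) • a - freeMQ.e z j
            + (T (-(n:ℤ)) : LaurentPolynomial ℤ) • freeMQ.e z i + freeMQ.e z j)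
          = a + (T (-((n:ℕ)+1:ℤ)) : LaurentPolynomial ℤ) • freeMQ.e z i := by
        have h6 : (T 1 : LaurentPolynomial ℤ) • a - freeMQ.e z j
            + (T (-(n:ℤ)) : LaurentPolynomial ℤ) • freeMQ.e z i + freeMQ.e z j
            = (T 1 : LaurentPolynomial ℤ) • a
              + (T (-(n:ℤ)) : LaurentPolynomial ℤ) • freeMQ.e z i := by abel
        rw [h6, smul_add, T_cancel2, smul_smul, ← T_add]
        congr 2
        push_cast
        ring
      rw [h5] at h4
      convert h4 using 3
      push_cast; rfl

lemma reach_sub_nat (n : ℕ) {a : {x : X // x ≠ z} →₀ LaurentPolynomial ℤ} (i : X) {j : X}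
    (h : (a, j) ∈ S) : (a - (T (n:ℤ) : LaurentPolynomial ℤ) • freeMQ.e z i, j) ∈ S := by
  induction n generalizing a with
  | zero => simpa [T_zero] using reach_sub_e z S hop hld i h
  | succ n ih =>
      have h1 := reach_ldz z S hop hld h
      have h3 := ih (a := (T (-1) : LaurentPolynomial ℤ) • (a + freeMQ.e z j)) h1
      have h4 := reach_opz z S hop hld h3
      have h5 : (T 1 : LaurentPolynomial ℤ) • ((T (-1) : LaurentPolynomial ℤ) • (a + freeMQ.e z j)
            - (T (n:ℤ) : LaurentPolynomial ℤ) • freeMQ.e z i) - freeMQ.e z j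
          = a - (T ((n:ℕ)+1:ℤ) : LaurentPolynomial ℤ) • freeMQ.e z i := by
        rw [smul_sub, T_cancel1, smul_smul, ← T_add]
        push_cast
        rw [add_comm (1:ℤ) (n:ℤ)]
        abel
      rw [h5] at h4
      convert h4 using 3
      push_cast; rfl

lemma reach_sub_negnat (n : ℕ) {a : {x : X // x ≠ z} →₀ LaurentPolynomial ℤ} (i : X) {j : X}
    (h : (a, j) ∈ S) : (a - (T (-(n:ℤ)) : LaurentPolynomial ℤ) • freeMQ.e z i, j) ∈ S := by
  induction n generalizing a with
  | zero => simpa [T_zero] using reach_sub_e z S hop hld i h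
  | succ n ih =>
      have h1 := reach_opz z S hop hld h
      have h3 := ih (a := (T 1 : LaurentPolynomial ℤ) • a - freeMQ.e z j) h1
      have h4 := reach_ldz z S hop hld h3
      have h5 : (T (-1) : LaurentPolynomial ℤ) • ((T 1 : LaurentPolynomial ℤ) • a - freeMQ.e z j
            - (T (-(n:ℤ)) : LaurentPolynomial ℤ) • freeMQ.e z i + freeMQ.e z j)
          = a - (T (-((n:ℕ)+1:ℤ)) : LaurentPolynomial ℤ) • freeMQ.e z i := by
        have h6 : (T 1 : LaurentPolynomial ℤ) • a - freeMQ.e z j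
            - (T (-(n:ℤ)) : LaurentPolynomial ℤ) • freeMQ.e z i + freeMQ.e z j
            = (T 1 : LaurentPolynomial ℤ) • a
              - (T (-(n:ℤ)) : LaurentPolynomial ℤ) • freeMQ.e z i := by abel
        rw [h6, smul_sub, T_cancel2, smul_smul, ← T_add]
        congr 2
        push_cast
        ring
      rw [h5] at h4
      convert h4 using 3
      push_cast; rfl

lemma reach_add_int (n : ℤ) {a : {x : X // x ≠ z} →₀ LaurentPolynomial ℤ} (i : X) {j : X}
    (h : (a, j) ∈ S) : (a + (T n : LaurentPolynomial ℤ) • freeMQ.e z i, j) ∈ S := by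
  obtain ⟨k, rfl | rfl⟩ := Int.eq_nat_or_neg n
  · exact reach_add_nat z S hop hld k i h
  · exact reach_add_negnat z S hop hld k i h

lemma reach_sub_int (n : ℤ) {a : {x : X // x ≠ z} →₀ LaurentPolynomial ℤ} (i : X) {j : X}
    (h : (a, j) ∈ S) : (a - (T n : LaurentPolynomial ℤ) • freeMQ.e z i, j) ∈ S := by
  obtain ⟨k, rfl | rfl⟩ := Int.eq_nat_or_neg n
  · exact reach_sub_nat z S hop hld k i h
  · exact reach_sub_negnat z S hop hld k i h

end Reach
end FMQ

namespace FMQ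
section Reach2
variable {X : Type*} [DecidableEq X] (z : X)

lemma mono_eq (x : {x : X // x ≠ z}) (n c : ℤ) :
    (Finsupp.single x (AddMonoidAlgebra.single n c) : {x : X // x ≠ z} →₀ LaurentPolynomial ℤ)
      = c • ((T n : LaurentPolynomial ℤ) • freeMQ.e z x.1) := by
  rw [freeMQ.e, dif_neg x.2, Subtype.coe_eta]
  rw [Finsupp.smul_single, Finsupp.smul_single]
  congr 1
  rw [smul_eq_mul, mul_one]
  have hTn : (T n : LaurentPolynomial ℤ) = AddMonoidAlgebra.single n 1 := rfl
  rw [hTn, AddMonoidAlgebra.smul_single, smul_eq_mul, mul_one]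

variable (S : Set (({x : X // x ≠ z} →₀ LaurentPolynomial ℤ) × X))
variable (hop : ∀ (i : X) q, q ∈ S → freeMQ.op z (0, i) q ∈ S)
variable (hld : ∀ (i : X) q, q ∈ S → freeMQ.ld z (0, i) q ∈ S)
include hop hld

lemma reach_add_smul (c : ℤ) (n : ℤ) (i : X)
    {a : {x : X // x ≠ z} →₀ LaurentPolynomial ℤ} {j : X} (h : (a, j) ∈ S) :
    (a + c • ((T n : LaurentPolynomial ℤ) • freeMQ.e z i), j) ∈ S := by
  induction c using Int.induction_on with
  | zero => simpa using h
  | succ k ih =>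
      have h2 := reach_add_int z S hop hld n i ih
      have h3 : a + (k:ℤ) • ((T n : LaurentPolynomial ℤ) • freeMQ.e z i)
            + (T n : LaurentPolynomial ℤ) • freeMQ.e z i
          = a + ((k:ℤ)+1) • ((T n : LaurentPolynomial ℤ) • freeMQ.e z i) := by
        rw [add_smul, one_smul]; abel
      rwa [h3] at h2
  | pred k ih =>
      have h2 := reach_sub_int z S hop hld n i ih
      have h3 : a + (-(k:ℤ)) • ((T n : LaurentPolynomial ℤ) • freeMQ.e z i)
            - (T n : LaurentPolynomial ℤ) • freeMQ.e z i
          = a + (-(k:ℤ)-1) • ((T n : LaurentPolynomial ℤ) • freeMQ.e z i) := by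
        rw [sub_smul, one_smul]; abel
      rwa [h3] at h2

lemma reach_add_single (x : {x : X // x ≠ z}) (p : LaurentPolynomial ℤ)
    {a : {x : X // x ≠ z} →₀ LaurentPolynomial ℤ} {j : X} (h : (a, j) ∈ S) :
    (a + Finsupp.single x p, j) ∈ S := by
  induction p using AddMonoidAlgebra.induction generalizing a with
  | zero => simpa using h
  | single_add n c p hn hc ih =>
      have h3 := reach_add_smul z S hop hld c n x.1 (ih h)
      convert h3 using 2
      rw [Finsupp.single_add, ← mono_eq]
      abel

lemma reach_all (hgen : ∀ i : X, ((0 : {x : X // x ≠ z} →₀ LaurentPolynomial ℤ), i) ∈ S)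
    (p : ({x : X // x ≠ z} →₀ LaurentPolynomial ℤ) × X) : p ∈ S := by
  obtain ⟨a, j⟩ := p
  induction a using Finsupp.induction generalizing j with
  | zero => exact hgen j
  | single_add x q f hx hq ih =>
      have h2 := reach_add_single z S hop hld x q (ih j)
      have h3 : f + (Finsupp.single x q : {x : X // x ≠ z} →₀ LaurentPolynomial ℤ)
          = (Finsupp.single x q : {x : X // x ≠ z} →₀ LaurentPolynomial ℤ) + f := by abel
      rw [h3] at h2
      convert h2 using 2

end Reach2
end FMQ


set_option maxHeartbeats 1000000 in
/-- `F = M × X` is the free medial quandle on `{(0,i) : i ∈ X}`: every map of the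
generators into a medial quandle `Q` extends uniquely to a quandle homomorphism. -/
theorem freeMQ_is_free {X : Type*} [DecidableEq X] (z : X)
    {Q : Type*} (opQ : Q → Q → Q)
    (hidem : ∀ x, opQ x x = x)
    (hldist : ∀ x y w, opQ x (opQ y w) = opQ (opQ x y) (opQ x w))
    (hlq : ∀ x y, ∃! u, opQ x u = y)
    (hmed : ∀ x y u v, opQ (opQ x y) (opQ u v) = opQ (opQ x u) (opQ y v))
    (ψ : X → Q) :
    ∃! Ψ : (({x : X // x ≠ z} →₀ LaurentPolynomial ℤ) × X) → Q,
      (∀ p q, Ψ (freeMQ.op z p q) = opQ (Ψ p) (Ψ q)) ∧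
      (∀ i : X, Ψ ((0 : {x : X // x ≠ z} →₀ LaurentPolynomial ℤ), i) = ψ i) := by
  classical
  set σ : Equiv.Perm Q := FMQ.sig opQ hlq z ψ with hσ
  set Pm : ({x : X // x ≠ z} →₀ LaurentPolynomial ℤ) → Equiv.Perm Q :=
    FMQ.P opQ hlq z ψ hldist hmed with hPm
  have P_add : ∀ m m', Pm (m + m') = Pm m * Pm m' := FMQ.P_add opQ hlq z ψ hldist hmed
  have P_neg : ∀ m, Pm (-m) = (Pm m)⁻¹ := FMQ.P_neg opQ hlq z ψ hldist hmed
  have P_T : ∀ m, Pm ((T 1 : LaurentPolynomial ℤ) • m) = σ * Pm m * σ⁻¹ :=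
    FMQ.P_T opQ hlq z ψ hldist hmed
  have P_e : ∀ i : X, Pm (freeMQ.e z i) = FMQ.lam opQ hlq (ψ i) * σ⁻¹ :=
    FMQ.P_e opQ hlq z ψ hldist hmed
  have hΨgen : ∀ i : X, Pm 0 (ψ i) = ψ i := by
    intro i
    rw [hPm, FMQ.P_zero]
    rfl
  have hΨhom : ∀ p q, Pm (freeMQ.op z p q).1 (ψ (freeMQ.op z p q).2)
      = opQ (Pm p.1 (ψ p.2)) (Pm q.1 (ψ q.2)) := by
    rintro ⟨a, i⟩ ⟨b, j⟩
    have hL1 : FMQ.lam opQ hlq (Pm a (ψ i)) = Pm a * FMQ.lam opQ hlq (ψ i) * (Pm a)⁻¹ :=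
      FMQ.L1 opQ hlq hldist (FMQ.D_le_Lam opQ hlq (FMQ.P_mem opQ hlq z ψ hldist hmed a)) (ψ i)
    have hlami : FMQ.lam opQ hlq (ψ i) = Pm (freeMQ.e z i) * σ := by
      rw [P_e i]; group
    have c1 : (Pm a)⁻¹ * Pm b = Pm (-a + b) := by rw [P_add, P_neg]
    have c2 : σ * Pm (-a + b) = Pm ((T 1 : LaurentPolynomial ℤ) • (-a + b)) * σ := by
      rw [P_T]; group
    have hkey : (1 - T 1 : LaurentPolynomial ℤ) • a + (T 1 : LaurentPolynomial ℤ) • b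
          + freeMQ.e z i - freeMQ.e z j + freeMQ.e z j
        = a + freeMQ.e z i + (T 1 : LaurentPolynomial ℤ) • (-a + b) := by
      module
    have hperm : Pm a * FMQ.lam opQ hlq (ψ i) * (Pm a)⁻¹ * Pm b
        = Pm ((1 - T 1 : LaurentPolynomial ℤ) • a + (T 1 : LaurentPolynomial ℤ) • b
            + freeMQ.e z i - freeMQ.e z j) * (Pm (freeMQ.e z j) * σ) := by
      calc Pm a * FMQ.lam opQ hlq (ψ i) * (Pm a)⁻¹ * Pm b
          = Pm a * Pm (freeMQ.e z i) * (σ * ((Pm a)⁻¹ * Pm b)) := by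
            rw [hlami]; group
        _ = Pm a * Pm (freeMQ.e z i) * (Pm ((T 1 : LaurentPolynomial ℤ) • (-a + b)) * σ) := by
            rw [c1, c2]
        _ = Pm (a + freeMQ.e z i + (T 1 : LaurentPolynomial ℤ) • (-a + b)) * σ := by
            rw [P_add, P_add]; group
        _ = Pm ((1 - T 1 : LaurentPolynomial ℤ) • a + (T 1 : LaurentPolynomial ℤ) • b
              + freeMQ.e z i - freeMQ.e z j + freeMQ.e z j) * σ := by rw [hkey]
        _ = Pm ((1 - T 1 : LaurentPolynomial ℤ) • a + (T 1 : LaurentPolynomial ℤ) • b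
              + freeMQ.e z i - freeMQ.e z j) * (Pm (freeMQ.e z j) * σ) := by
            rw [P_add, mul_assoc]
    have hfix : (Pm (freeMQ.e z j) * σ) (ψ j) = ψ j := by
      have hh : Pm (freeMQ.e z j) * σ = FMQ.lam opQ hlq (ψ j) := by
        rw [P_e j]; group
      rw [hh]
      exact hidem (ψ j)
    show Pm ((1 - T 1 : LaurentPolynomial ℤ) • a + (T 1 : LaurentPolynomial ℤ) • b
        + freeMQ.e z i - freeMQ.e z j) (ψ j) = opQ (Pm a (ψ i)) (Pm b (ψ j))
    calc Pm ((1 - T 1 : LaurentPolynomial ℤ) • a + (T 1 : LaurentPolynomial ℤ) • b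
            + freeMQ.e z i - freeMQ.e z j) (ψ j)
        = Pm ((1 - T 1 : LaurentPolynomial ℤ) • a + (T 1 : LaurentPolynomial ℤ) • b
            + freeMQ.e z i - freeMQ.e z j) ((Pm (freeMQ.e z j) * σ) (ψ j)) := by rw [hfix]
      _ = (Pm ((1 - T 1 : LaurentPolynomial ℤ) • a + (T 1 : LaurentPolynomial ℤ) • b
            + freeMQ.e z i - freeMQ.e z j) * (Pm (freeMQ.e z j) * σ)) (ψ j) := rfl
      _ = (Pm a * FMQ.lam opQ hlq (ψ i) * (Pm a)⁻¹ * Pm b) (ψ j) := by rw [hperm]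
      _ = (FMQ.lam opQ hlq (Pm a (ψ i))) (Pm b (ψ j)) := by rw [hL1]; rfl
      _ = opQ (Pm a (ψ i)) (Pm b (ψ j)) := rfl
  refine ⟨fun p => Pm p.1 (ψ p.2), ⟨hΨhom, hΨgen⟩, ?_⟩
  rintro Ψ' ⟨hhom', hgen'⟩
  funext p
  refine FMQ.reach_all z {p | Ψ' p = Pm p.1 (ψ p.2)} ?_ ?_ ?_ p
  · intro i q hq
    have hq' : Ψ' q = Pm q.1 (ψ q.2) := hq
    have h1 : Ψ' (freeMQ.op z (0, i) q) = opQ (ψ i) (Ψ' q) := by rw [hhom', hgen']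
    have h0 : (Pm ((0 : {x : X // x ≠ z} →₀ LaurentPolynomial ℤ), i).1)
        (ψ (((0 : {x : X // x ≠ z} →₀ LaurentPolynomial ℤ), i)).2) = ψ i := hΨgen i
    have h2 : Pm (freeMQ.op z (0, i) q).1 (ψ (freeMQ.op z (0, i) q).2)
        = opQ (ψ i) (Pm q.1 (ψ q.2)) := by
      have h3 := hΨhom (0, i) q
      rw [h0] at h3
      exact h3
    show Ψ' (freeMQ.op z (0, i) q) = _
    rw [h1, hq', h2]
  · intro i q hq
    have hq' : Ψ' q = Pm q.1 (ψ q.2) := hq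
    have hco : freeMQ.op z (0, i) (freeMQ.ld z (0, i) q) = q := FMQ.op_ld_cancel z _ q
    have h1 : opQ (ψ i) (Ψ' (freeMQ.ld z (0, i) q)) = Ψ' q := by
      rw [← hgen' i, ← hhom', hco]
    have h0 : (Pm ((0 : {x : X // x ≠ z} →₀ LaurentPolynomial ℤ), i).1)
        (ψ (((0 : {x : X // x ≠ z} →₀ LaurentPolynomial ℤ), i)).2) = ψ i := hΨgen i
    have h2 : opQ (ψ i) (Pm (freeMQ.ld z (0, i) q).1 (ψ (freeMQ.ld z (0, i) q).2))
        = Ψ' q := by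
      have h3 := hΨhom (0, i) (freeMQ.ld z (0, i) q)
      rw [hco, h0] at h3
      rw [hq']
      exact h3.symm
    exact (hlq (ψ i) (Ψ' q)).unique h1 h2
  · intro i
    show Ψ' (0, i) = Pm 0 (ψ i)
    rw [hgen' i, hΨgen i]
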